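/- Let u₀, w₀ ∈ ℝ and u, w ∈ ℝ³, and set M := u₀σ₀ + u·σ and N := w₀σ₀ + w·σ. Then the limit as t → ∞ of (1/t)·∫₀ᵗ exp(−isM)·N·exp(isM) ds exists in the 2×2 complex matrices and equals w₀σ₀ + v·σ, where v := ((u·w)/‖u‖²)·u if u ≠ 0 and v := w if u = 0. -/

import Mathlib

noncomputable section

open Matrix Filter

attribute [local instance] Matrix.linftyOpNormedAddCommGroup Matrix.linftyOpNormedSpace

/-- The Pauli matrix `σ₁`. -/
def pauli1 : Matrix (Fin 2) (Fin 2) ℂ := !![0, 1; 1, 0]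

/-- The Pauli matrix `σ₂`. -/
def pauli2 : Matrix (Fin 2) (Fin 2) ℂ := !![0, -Complex.I; Complex.I, 0]

/-- The Pauli matrix `σ₃`. -/
def pauli3 : Matrix (Fin 2) (Fin 2) ℂ := !![1, 0; 0, -1]

/-- `u·σ := u₁σ₁ + u₂σ₂ + u₃σ₃` for `u ∈ ℝ³`. -/
def pauliVec (u : EuclideanSpace ℝ (Fin 3)) : Matrix (Fin 2) (Fin 2) ℂ :=
  (u 0 : ℂ) • pauli1 + (u 1 : ℂ) • pauli2 + (u 2 : ℂ) • pauli3

attribute [local instance] Matrix.linftyOpNormedRing Matrix.linftyOpNormedAlgebra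

namespace Stmt14Aux

abbrev Mat := Matrix (Fin 2) (Fin 2) ℂ

lemma pauliVec_anticomm (x y : EuclideanSpace ℝ (Fin 3)) :
    pauliVec x * pauliVec y + pauliVec y * pauliVec x
      = ((2 * inner ℝ x y : ℝ) : ℂ) • (1 : Mat) := by
  have h : inner ℝ x y = x 0 * y 0 + x 1 * y 1 + x 2 * y 2 := by
    simp [PiLp.inner_apply, Fin.sum_univ_three]
    ring
  rw [h]
  ext i j
  fin_cases i <;> fin_cases j <;>
    (simp [pauliVec, pauli1, pauli2, pauli3, Matrix.mul_apply, Fin.sum_univ_two,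
      Matrix.one_apply, Complex.ext_iff]) <;> ring_nf <;> exact ⟨trivial, trivial⟩

lemma pauliVec_sub_smul (c : ℝ) (x y : EuclideanSpace ℝ (Fin 3)) :
    pauliVec (x - c • y) = pauliVec x - (c : ℂ) • pauliVec y := by
  ext i j
  fin_cases i <;> fin_cases j <;>
    (simp [pauliVec, pauli1, pauli2, pauli3, Complex.ext_iff]) <;> ring

lemma pauliVec_conjTranspose (x : EuclideanSpace ℝ (Fin 3)) :
    (pauliVec x)ᴴ = pauliVec x := by
  ext i j
  fin_cases i <;> fin_cases j <;>
    simp [pauliVec, pauli1, pauli2, pauli3, Complex.ext_iff]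

lemma pauliVec_zero : pauliVec (0 : EuclideanSpace ℝ (Fin 3)) = 0 := by
  ext i j
  fin_cases i <;> fin_cases j <;> simp [pauliVec, pauli1, pauli2, pauli3]

/-- If `P` anticommutes with `X`, then `P * exp X = exp (-X) * P`. -/
lemma mul_exp_of_anticomm {P X : Mat} (h : P * X = -(X * P)) :
    P * NormedSpace.exp X = NormedSpace.exp (-X) * P := by
  have hpow : ∀ n : ℕ, P * X ^ n = (-X) ^ n * P := by
    intro n
    induction n with
    | zero => simp
    | succ n ih =>
      calc P * X ^ (n + 1) = P * X ^ n * X := by rw [pow_succ, mul_assoc]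
        _ = (-X) ^ n * (P * X) := by rw [ih, mul_assoc]
        _ = (-X) ^ n * -(X * P) := by rw [h]
        _ = (-X) ^ (n + 1) * P := by
            rw [pow_succ]
            simp [mul_neg, neg_mul, mul_assoc]
  simp only [NormedSpace.exp_eq_tsum ℂ]
  erw [← (NormedSpace.expSeries_summable' (𝕂 := ℂ) X).tsum_mul_left P,
    ← (NormedSpace.expSeries_summable' (𝕂 := ℂ) (-X)).tsum_mul_right P]
  congr 1
  funext n
  rw [mul_smul_comm, hpow, smul_mul_assoc]

/-- A matrix with `U * Uᴴ = 1` has (L∞-operator) norm at most 2. -/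
lemma norm_le_two_of_unitary {U : Mat} (h : U * Uᴴ = 1) : ‖U‖ ≤ 2 := by
  have hentry : ∀ i j, ‖U i j‖ ≤ 1 := by
    intro i j
    have h1 : (U * Uᴴ) i i = 1 := by rw [h, Matrix.one_apply_eq]
    rw [Matrix.mul_apply, Fin.sum_univ_two] at h1
    simp only [Matrix.conjTranspose_apply] at h1
    have h2 : Complex.normSq (U i 0) + Complex.normSq (U i 1) = 1 := by
      have := congrArg Complex.re h1
      simpa [Complex.mul_conj] using this
    have h3 : Complex.normSq (U i j) ≤ 1 := by
      have h5 : Complex.normSq (U i j) ≤ ∑ k, Complex.normSq (U i k) :=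
        Finset.single_le_sum (fun k _ => Complex.normSq_nonneg (U i k)) (Finset.mem_univ j)
      rwa [Fin.sum_univ_two, h2] at h5
    have h4 : ‖U i j‖ ^ 2 ≤ 1 := by
      rwa [Complex.sq_norm]
    nlinarith [norm_nonneg (U i j)]
  have hnn : ‖U‖₊ ≤ 2 := by
    rw [Matrix.linfty_opNNNorm_def]
    apply Finset.sup_le
    intro i _
    rw [Fin.sum_univ_two]
    have e0 : ‖U i 0‖₊ ≤ 1 := by
      rw [← NNReal.coe_le_coe]; exact hentry i 0
    have e1 : ‖U i 1‖₊ ≤ 1 := by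
      rw [← NNReal.coe_le_coe]; exact hentry i 1
    calc ‖U i 0‖₊ + ‖U i 1‖₊ ≤ 1 + 1 := add_le_add e0 e1
      _ = 2 := by norm_num
  calc ‖U‖ = (‖U‖₊ : ℝ) := (coe_nnnorm U).symm
    _ ≤ 2 := by exact_mod_cast hnn

lemma exp_central (z : ℂ) :
    NormedSpace.exp (z • (1 : Mat)) = Complex.exp z • (1 : Mat) := by
  have h1 : z • (1 : Mat) = algebraMap ℂ Mat z := (Algebra.algebraMap_eq_smul_one z).symm
  erw [h1, ← NormedSpace.algebraMap_exp_comm, Algebra.algebraMap_eq_smul_one,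
    Complex.exp_eq_exp_ℂ]


lemma pauliVec_smul (c : ℝ) (y : EuclideanSpace ℝ (Fin 3)) :
    pauliVec (c • y) = (c : ℂ) • pauliVec y := by
  ext i j
  fin_cases i <;> fin_cases j <;>
    (simp [pauliVec, pauli1, pauli2, pauli3, Complex.ext_iff])

lemma main_calc (a2 : ℝ) (ha2 : 0 < a2) (A Np P N : Mat)
    (hAA : A * A = ((a2 : ℝ) : ℂ) • 1) (hAH : Aᴴ = A)
    (hPA : P * A = -(A * P)) (hNsplit : N = Np + P)
    (hNpA : Commute Np A) (u₀ : ℝ) (M : Mat) (hM : M = (u₀ : ℂ) • 1 + A) :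
    Tendsto
      (fun t : ℝ => (1 / t) •
        ∫ s in (0 : ℝ)..t,
          NormedSpace.exp (-((Complex.I * (s : ℂ)) • M)) * N *
            NormedSpace.exp ((Complex.I * (s : ℂ)) • M))
      atTop (nhds Np) := by
  have ha2' : ((a2 : ℝ) : ℂ) ≠ 0 := by exact_mod_cast ne_of_gt ha2
  set B : Mat := (-(2 * Complex.I)) • A with hB
  set C : Mat := (Complex.I / (2 * a2)) • A with hC
  set G : ℝ → Mat := fun s => NormedSpace.exp ((s : ℂ) • B) with hG
  have hCB : C * B = 1 := by
    rw [hC, hB, smul_mul_assoc, mul_smul_comm, hAA, smul_smul, smul_smul]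
    have hsc : Complex.I / (2 * (a2 : ℂ)) * -(2 * Complex.I) * (a2 : ℂ) = 1 := by
      field_simp
      ring_nf
      simp [Complex.I_sq]
    rw [hsc, one_smul]
  have hcoe : ∀ (t : ℝ) (X : Mat), ((t : ℝ) : ℂ) • X = t • X := fun t X => by
    rw [← Complex.coe_algebraMap, algebraMap_smul]
  have hGs : ∀ s : ℝ, HasDerivAt G (G s * B) s := by
    intro s
    have h := hasDerivAt_exp_smul_const (𝕂 := ℝ) B s
    simp only [hG, hcoe]
    exact h
  have hGcomm : ∀ s : ℝ, Commute (G s) C := by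
    intro s
    apply Commute.exp_left
    rw [hB, hC]
    exact (((Commute.refl A).smul_left _).smul_right _).smul_left _
  have hF : ∀ s : ℝ, HasDerivAt (fun t : ℝ => t • Np + C * G t * P) (Np + G s * P) s := by
    intro s
    have h1 : HasDerivAt (fun t : ℝ => t • Np) ((1 : ℝ) • Np) s :=
      (hasDerivAt_id s).smul_const Np
    have h2 : HasDerivAt (fun t : ℝ => C * G t * P) (C * (G s * B) * P) s :=
      ((hGs s).const_mul C).mul_const P
    have h3 : C * (G s * B) * P = G s * P := by
      rw [← mul_assoc C, ← (hGcomm s).eq, mul_assoc (G s), hCB, mul_one]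
    rw [h3] at h2
    exact (h1.add h2).congr_deriv (by simp)
  have hGcont : Continuous G := by
    rw [hG]
    exact NormedSpace.exp_continuous.comp ((Complex.continuous_ofReal).smul continuous_const)
  -- the key pointwise identity
  have hkey : ∀ s : ℝ,
      NormedSpace.exp (-((Complex.I * (s : ℂ)) • M)) * N *
        NormedSpace.exp ((Complex.I * (s : ℂ)) • M) = Np + G s * P := by
    intro s
    have hMs : (Complex.I * (s : ℂ)) • M
        = (Complex.I * (s : ℂ) * (u₀ : ℂ)) • (1 : Mat) + (Complex.I * (s : ℂ)) • A := by
      rw [hM, smul_add, smul_smul]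
    have hXc : Commute ((Complex.I * (s : ℂ) * (u₀ : ℂ)) • (1 : Mat))
        ((Complex.I * (s : ℂ)) • A) := ((Commute.one_left A).smul_left _).smul_right _
    have hneg1 : -((Complex.I * (s : ℂ) * (u₀ : ℂ)) • (1 : Mat))
        = (-(Complex.I * (s : ℂ) * (u₀ : ℂ))) • (1 : Mat) := (neg_smul _ _).symm
    rw [hMs, neg_add, Matrix.exp_add_of_commute _ _ (hXc.neg_left.neg_right),
      Matrix.exp_add_of_commute _ _ hXc, hneg1, exp_central, exp_central]
    set Ep : Mat := NormedSpace.exp ((Complex.I * (s : ℂ)) • A) with hEp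
    set Em : Mat := NormedSpace.exp (-((Complex.I * (s : ℂ)) • A)) with hEm
    have hEE : Em * Ep = 1 := by
      rw [hEp, hEm, ← Matrix.exp_add_of_commute _ _ ((Commute.refl ((Complex.I * (s : ℂ)) • A)).neg_left),
        neg_add_cancel, NormedSpace.exp_zero]
    have hsmul : Complex.exp (-(Complex.I * (s : ℂ) * (u₀ : ℂ))) • (1 : Mat) * Em * N *
        (Complex.exp (Complex.I * (s : ℂ) * (u₀ : ℂ)) • (1 : Mat) * Ep)
        = (Complex.exp (-(Complex.I * (s : ℂ) * (u₀ : ℂ))) *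
            Complex.exp (Complex.I * (s : ℂ) * (u₀ : ℂ))) • (Em * N * Ep) := by
      simp only [smul_mul_assoc, mul_smul_comm, one_mul, smul_smul]
      rw [mul_comm (Complex.exp (Complex.I * (s : ℂ) * (u₀ : ℂ)))]
    rw [hsmul, ← Complex.exp_add, neg_add_cancel, Complex.exp_zero, one_smul]
    -- now: Em * N * Ep = Np + G s * P
    have hNpE : Em * Np * Ep = Np := by
      have hcom : Commute Np ((Complex.I * (s : ℂ)) • A) := hNpA.smul_right _
      have h4 : Em * Np = Np * Em := by
        rw [hEm]
        exact ((hcom.neg_right.exp_right).symm).eq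
      rw [h4, mul_assoc, hEE, mul_one]
    have hPanti : P * ((Complex.I * (s : ℂ)) • A) = -(((Complex.I * (s : ℂ)) • A) * P) := by
      rw [mul_smul_comm, smul_mul_assoc, hPA, smul_neg]
    have hPE : P * Ep = Em * P := by
      rw [hEp, hEm]
      exact mul_exp_of_anticomm hPanti
    have hEEG : Em * Em = G s := by
      rw [hEm, hG, ← Matrix.exp_add_of_commute _ _ (Commute.refl _), hB]
      congr 1
      rw [smul_smul, ← neg_smul, ← add_smul]
      congr 1
      ring
    rw [hNsplit, mul_add, add_mul, hNpE, mul_assoc, hPE, ← mul_assoc, hEEG]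
  -- the integral via FTC
  have hint : ∀ t : ℝ,
      (∫ s in (0:ℝ)..t, NormedSpace.exp (-((Complex.I * (s : ℂ)) • M)) * N *
        NormedSpace.exp ((Complex.I * (s : ℂ)) • M))
      = t • Np + C * G t * P - C * P := by
    intro t
    have hcont : Continuous (fun s : ℝ => Np + G s * P) :=
      continuous_const.add (hGcont.mul continuous_const)
    have hFTC := intervalIntegral.integral_eq_sub_of_hasDerivAt
      (f := fun t : ℝ => t • Np + C * G t * P) (f' := fun s : ℝ => Np + G s * P)
      (fun s _ => hF s) (hcont.intervalIntegrable 0 t)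
    calc (∫ s in (0:ℝ)..t, NormedSpace.exp (-((Complex.I * (s : ℂ)) • M)) * N *
          NormedSpace.exp ((Complex.I * (s : ℂ)) • M))
        = ∫ s in (0:ℝ)..t, (Np + G s * P) :=
          intervalIntegral.integral_congr (fun s _ => hkey s)
      _ = ((t : ℝ) • Np + C * G t * P) - ((0 : ℝ) • Np + C * G 0 * P) := hFTC
      _ = t • Np + C * G t * P - C * P := by
          rw [hG]
          simp
  have hGH : ∀ t : ℝ, G t * (G t)ᴴ = 1 := by
    intro t
    have h1 : (((t : ℝ) : ℂ) • B)ᴴ = -(((t : ℝ) : ℂ) • B) := by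
      rw [Matrix.conjTranspose_smul, hB, Matrix.conjTranspose_smul, hAH]
      rw [smul_smul, smul_smul, ← neg_smul]
      congr 1
      simp [Complex.star_def]
    rw [hG]
    simp only []
    rw [← Matrix.exp_conjTranspose, h1,
      ← Matrix.exp_add_of_commute _ _ ((Commute.refl (((t : ℝ) : ℂ) • B)).neg_right), add_neg_cancel,
      NormedSpace.exp_zero]
  have hGnorm : ∀ t : ℝ, ‖G t‖ ≤ 2 := fun t => norm_le_two_of_unitary (hGH t)
  have hbound : ∀ t : ℝ, ‖C * G t * P - C * P‖ ≤ ‖C‖ * 2 * ‖P‖ + ‖C‖ * ‖P‖ := by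
    intro t
    calc ‖C * G t * P - C * P‖ ≤ ‖C * G t * P‖ + ‖C * P‖ := norm_sub_le _ _
      _ ≤ ‖C‖ * ‖G t‖ * ‖P‖ + ‖C‖ * ‖P‖ := by
          refine add_le_add ?_ (norm_mul_le _ _)
          calc ‖C * G t * P‖ ≤ ‖C * G t‖ * ‖P‖ := norm_mul_le _ _
            _ ≤ ‖C‖ * ‖G t‖ * ‖P‖ :=
              mul_le_mul_of_nonneg_right (norm_mul_le _ _) (norm_nonneg _)
      _ ≤ ‖C‖ * 2 * ‖P‖ + ‖C‖ * ‖P‖ := by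
          gcongr
          exact hGnorm t
  have hzero : Tendsto (fun t : ℝ => (1/t) • (C * G t * P - C * P)) atTop
      (nhds (0 : Mat)) := by
    apply squeeze_zero_norm' (a := fun t : ℝ => (1/t) * (‖C‖ * 2 * ‖P‖ + ‖C‖ * ‖P‖))
    · filter_upwards [eventually_gt_atTop (0:ℝ)] with t ht
      rw [norm_smul]
      have h4 : ‖(1/t : ℝ)‖ = 1/t := abs_of_pos (by positivity)
      rw [h4]
      exact mul_le_mul_of_nonneg_left (hbound t) (by positivity)
    · have h5 : Tendsto (fun t : ℝ => 1/t) atTop (nhds 0) := by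
        simpa [one_div] using tendsto_inv_atTop_zero
      simpa using h5.mul_const (‖C‖ * 2 * ‖P‖ + ‖C‖ * ‖P‖)
  have hmain : Tendsto (fun t : ℝ => Np + (1/t) • (C * G t * P - C * P)) atTop (nhds Np) := by
    simpa using (tendsto_const_nhds (x := Np) (f := atTop)).add hzero
  apply hmain.congr'
  filter_upwards [eventually_gt_atTop (0:ℝ)] with t ht
  rw [hint t, add_sub_assoc, smul_add, smul_smul, one_div_mul_cancel (ne_of_gt ht), one_smul]




end Stmt14Aux

open Stmt14Aux NormedSpace

open scoped Classical in
/-- Let `u₀, w₀ ∈ ℝ` and `u, w ∈ ℝ³`, and set `M := u₀σ₀ + u·σ` and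
`N := w₀σ₀ + w·σ`.  Then the limit as `t → ∞` of `(1/t)·∫₀ᵗ exp(−isM)·N·exp(isM) ds` exists in
the 2×2 complex matrices and equals `w₀σ₀ + v·σ`, where `v := ((u·w)/‖u‖²)·u` if `u ≠ 0` and
`v := w` if `u = 0`. -/
theorem stmt_14 (u₀ w₀ : ℝ) (u w : EuclideanSpace ℝ (Fin 3))
    (M N : Matrix (Fin 2) (Fin 2) ℂ)
    (hM : M = (u₀ : ℂ) • (1 : Matrix (Fin 2) (Fin 2) ℂ) + pauliVec u)
    (hN : N = (w₀ : ℂ) • (1 : Matrix (Fin 2) (Fin 2) ℂ) + pauliVec w) :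
    Tendsto
      (fun t : ℝ => (1 / t) •
        ∫ s in (0 : ℝ)..t,
          NormedSpace.exp (-((Complex.I * (s : ℂ)) • M)) * N *
            NormedSpace.exp ((Complex.I * (s : ℂ)) • M))
      atTop
      (nhds ((w₀ : ℂ) • (1 : Matrix (Fin 2) (Fin 2) ℂ) +
        pauliVec (if u = 0 then w else ((inner ℝ u w) / ‖u‖ ^ 2) • u))) := by
  by_cases hu : u = 0
  · -- degenerate case: `M` is central and the integrand is constantly `N`
    rw [if_pos hu]
    have hM0 : M = (u₀ : ℂ) • (1 : Matrix (Fin 2) (Fin 2) ℂ) := by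
      rw [hM, hu, pauliVec_zero, add_zero]
    have hint : ∀ s : ℝ,
        NormedSpace.exp (-((Complex.I * (s : ℂ)) • M)) * N *
          NormedSpace.exp ((Complex.I * (s : ℂ)) • M) = N := by
      intro s
      have hMs : (Complex.I * (s : ℂ)) • M
          = (Complex.I * (s : ℂ) * (u₀ : ℂ)) • (1 : Matrix (Fin 2) (Fin 2) ℂ) := by
        rw [hM0, smul_smul]
      have hneg : -((Complex.I * (s : ℂ) * (u₀ : ℂ)) • (1 : Matrix (Fin 2) (Fin 2) ℂ))
          = (-(Complex.I * (s : ℂ) * (u₀ : ℂ))) • (1 : Matrix (Fin 2) (Fin 2) ℂ) :=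
        (neg_smul _ _).symm
      rw [hMs, hneg, exp_central, exp_central]
      simp only [smul_mul_assoc, mul_smul_comm, one_mul, mul_one, smul_smul]
      rw [← Complex.exp_add]
      simp
    have heq : ∀ᶠ t in atTop, N =
        (1 / t) • ∫ s in (0 : ℝ)..t,
          NormedSpace.exp (-((Complex.I * (s : ℂ)) • M)) * N *
            NormedSpace.exp ((Complex.I * (s : ℂ)) • M) := by
      filter_upwards [eventually_gt_atTop (0:ℝ)] with t ht
      simp only [hint]
      rw [intervalIntegral.integral_const, sub_zero, smul_smul, one_div_mul_cancel (ne_of_gt ht),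
        one_smul]
    have h := Tendsto.congr' heq (tendsto_const_nhds (x := N) (f := atTop))
    rw [← hN]
    exact h
  · -- nondegenerate case
    rw [if_neg hu]
    have ha2 : (0:ℝ) < ‖u‖ ^ 2 := by
      have := norm_pos_iff.mpr hu
      positivity
    set c : ℝ := inner ℝ u w / ‖u‖ ^ 2 with hc
    have hAA : pauliVec u * pauliVec u = ((‖u‖ ^ 2 : ℝ) : ℂ) • 1 := by
      have h1 := pauliVec_anticomm u u
      rw [real_inner_self_eq_norm_sq] at h1
      have h2 : pauliVec u * pauliVec u
          = (2⁻¹ : ℂ) • (pauliVec u * pauliVec u + pauliVec u * pauliVec u) := by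
        rw [← two_smul ℂ (pauliVec u * pauliVec u), smul_smul]
        norm_num
      rw [h2, h1, smul_smul]
      congr 1
      push_cast
      ring
    have hiz : inner ℝ (w - c • u) u = 0 := by
      rw [inner_sub_left, real_inner_smul_left, real_inner_self_eq_norm_sq, hc,
        div_mul_cancel₀ _ (ne_of_gt ha2), real_inner_comm, sub_self]
    have hPA : (pauliVec w - (c : ℂ) • pauliVec u) * pauliVec u
        = -(pauliVec u * (pauliVec w - (c : ℂ) • pauliVec u)) := by
      have h1 := pauliVec_anticomm (w - c • u) u
      rw [hiz, pauliVec_sub_smul] at h1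
      simp only [mul_zero, Complex.ofReal_zero, zero_smul] at h1
      exact eq_neg_of_add_eq_zero_left h1
    have hNsplit : N = ((w₀ : ℂ) • 1 + (c : ℂ) • pauliVec u)
        + (pauliVec w - (c : ℂ) • pauliVec u) := by
      rw [hN]; abel
    have hNpA : Commute ((w₀ : ℂ) • 1 + (c : ℂ) • pauliVec u) (pauliVec u) :=
      Commute.add_left ((Commute.one_left _).smul_left _) ((Commute.refl _).smul_left _)
    have hres := main_calc (‖u‖ ^ 2) ha2 (pauliVec u)
      ((w₀ : ℂ) • 1 + (c : ℂ) • pauliVec u) (pauliVec w - (c : ℂ) • pauliVec u) N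
      hAA (pauliVec_conjTranspose u) hPA hNsplit hNpA u₀ M hM
    have hgoal : (w₀ : ℂ) • (1 : Matrix (Fin 2) (Fin 2) ℂ) + pauliVec (c • u)
        = (w₀ : ℂ) • 1 + (c : ℂ) • pauliVec u := by
      rw [pauliVec_smul]
    rw [hgoal]
    exact hres
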